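/- Let n ≥ 2 and m ≥ 1 be integers and 0 < Λ ≤ √2. Let λ₁ ≥ λ₂ ≥ ⋯ ≥ λₙ ≥ 0 be real numbers with λᵢ = 0 whenever i > m, and suppose λ₁λᵢ ≤ Λ for every i ≥ 2. Let h_{α,ij} (1 ≤ α ≤ m, 1 ≤ i,j ≤ n) be real numbers symmetric in the last two indices (h_{α,ij} = h_{α,ji}), and write h_{i,jk} for h_{α,jk} with α = i, interpreted as 0 when i > m. Then Σ_{α=1}^m Σ_{i,j=1}^n h²_{α,ij} + Σ_{i,j=1}^n λᵢ² h²_{i,ij} + Σ_{k=1}^n Σ_{i≠j} λᵢλⱼ h_{i,jk} h_{j,ik} ≥ (1 − Λ/√2) Σ_{α=1}^m Σ_{i,j=1}^n h²_{α,ij} + (1/n) Σ_{j=1}^n (Σ_{i=1}^n λᵢ h_{i,ij})². (This is the algebraic inequality underlying the estimate Δ_M log v ≥ (1 − Λ/√2)|B_M|² + (1/n)|∇ log v|² for minimal graphs with 2-dilation bounded by Λ.) -/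

import Mathlib

open Finset

namespace CorAux

/-! ### Scalar inequalities -/

private lemma oneneg (s Λ μ x y : ℝ) (hs2' : s ≤ 2) (hs0 : 0 < s) (hΛ0 : 0 ≤ Λ)
    (h0 : 0 ≤ μ) (h1 : μ ≤ Λ) (hxy : x*y < 0) :
    0 ≤ s*(μ*(x*y)) + Λ*(x^2+y^2) := by
  have F1 : 0 ≤ s*(Λ-μ)*(-(x*y)) :=
    mul_nonneg (mul_nonneg hs0.le (by linarith)) (by linarith)
  have F2 : 0 ≤ (2-s)*Λ*(-(x*y)) :=
    mul_nonneg (mul_nonneg (by linarith) hΛ0) (by linarith)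
  have F3 : 0 ≤ Λ*(x+y)^2 := mul_nonneg hΛ0 (sq_nonneg _)
  nlinarith [F1, F2, F3]

private lemma twoneg (s Λ μ ν x y z : ℝ) (hs2 : s^2 = 2) (hs0 : 0 < s) (hΛ0 : 0 ≤ Λ)
    (h0 : 0 ≤ μ) (h1 : μ ≤ Λ) (h0' : 0 ≤ ν) (h1' : ν ≤ Λ)
    (hxy : x*y < 0) (hxz : x*z < 0) :
    0 ≤ s*(μ*(x*y)) + s*(ν*(x*z)) + Λ*(x^2+y^2+z^2) := by
  have F1 : 0 ≤ s*(Λ-μ)*(-(x*y)) :=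
    mul_nonneg (mul_nonneg hs0.le (by linarith)) (by linarith)
  have F2 : 0 ≤ s*(Λ-ν)*(-(x*z)) :=
    mul_nonneg (mul_nonneg hs0.le (by linarith)) (by linarith)
  have F3 : 0 ≤ Λ*((s*x+y+z)^2) := mul_nonneg hΛ0 (sq_nonneg _)
  have F3' : Λ*((s*x+y+z)^2)
      = Λ*(2*x^2 + y^2 + z^2 + 2*(s*(x*y)) + 2*(s*(x*z)) + 2*(y*z)) := by
    linear_combination (Λ*x^2)*hs2
  rw [F3'] at F3
  have F4 : 0 ≤ Λ*(y-z)^2 := mul_nonneg hΛ0 (sq_nonneg _)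
  nlinarith [F1, F2, F3, F4]

/-- scalar AM-GM for the `k = i` terms -/
private lemma amgm1 (s Λ μ a b : ℝ) (hs2 : s^2 = 2) (hs0 : 0 < s) (hΛ0 : 0 ≤ Λ)
    (h0 : 0 ≤ μ) (h1 : μ ≤ Λ) :
    0 ≤ μ * (a*b) + Λ / s * (a^2 + b^2/2) := by
  have hrw : μ * (a*b) + Λ / s * (a^2 + b^2/2)
      = (1/s) * (s*(μ*(a*b)) + Λ*(a^2 + b^2/2)) := by
    field_simp
  rw [hrw]
  apply mul_nonneg (by positivity)
  rcases le_or_gt 0 (a*b) with hab | hab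
  · nlinarith [mul_nonneg (mul_nonneg hs0.le h0) hab, mul_nonneg hΛ0 (sq_nonneg a),
      mul_nonneg hΛ0 (sq_nonneg b)]
  · have F1 : 0 ≤ s*(Λ-μ)*(-(a*b)) :=
      mul_nonneg (mul_nonneg hs0.le (by linarith)) (by linarith)
    have F2 : 0 ≤ Λ*((s*a+b)^2) := mul_nonneg hΛ0 (sq_nonneg _)
    have F2' : Λ*((s*a+b)^2) = Λ*(2*a^2 + 2*(s*(a*b)) + b^2) := by
      linear_combination (Λ*a^2)*hs2
    rw [F2'] at F2
    nlinarith [F1, F2]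

/-- the three-variable inequality behind the distinct-index terms -/
private lemma lemP (s Λ μ₁ μ₂ μ₃ a b c : ℝ) (hs2 : s^2 = 2) (hs0 : 0 < s) (hΛ0 : 0 ≤ Λ)
    (h1 : 0 ≤ μ₁) (h2 : 0 ≤ μ₂) (h3 : 0 ≤ μ₃)
    (h1' : μ₁ ≤ Λ) (h2' : μ₂ ≤ Λ) (h3' : μ₃ ≤ Λ) :
    0 ≤ μ₃ * (a*b) + μ₂ * (a*c) + μ₁ * (b*c) + Λ / s * (a^2 + b^2 + c^2) := by
  have hs2' : s ≤ 2 := by nlinarith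
  have hrw : μ₃ * (a*b) + μ₂ * (a*c) + μ₁ * (b*c) + Λ / s * (a^2 + b^2 + c^2)
      = (1/s) * (s*(μ₃*(a*b)) + s*(μ₂*(a*c)) + s*(μ₁*(b*c)) + Λ*(a^2+b^2+c^2)) := by
    field_simp
  rw [hrw]
  apply mul_nonneg (by positivity)
  have P3 : 0 ≤ a*b → 0 ≤ s*(μ₃*(a*b)) := fun hh => mul_nonneg hs0.le (mul_nonneg h3 hh)
  have P2 : 0 ≤ a*c → 0 ≤ s*(μ₂*(a*c)) := fun hh => mul_nonneg hs0.le (mul_nonneg h2 hh)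
  have P1 : 0 ≤ b*c → 0 ≤ s*(μ₁*(b*c)) := fun hh => mul_nonneg hs0.le (mul_nonneg h1 hh)
  have Qa : 0 ≤ Λ*a^2 := mul_nonneg hΛ0 (sq_nonneg a)
  have Qb : 0 ≤ Λ*b^2 := mul_nonneg hΛ0 (sq_nonneg b)
  have Qc : 0 ≤ Λ*c^2 := mul_nonneg hΛ0 (sq_nonneg c)
  rcases le_or_gt 0 (a*b) with hab | hab <;>
    rcases le_or_gt 0 (a*c) with hac | hac <;>
      rcases le_or_gt 0 (b*c) with hbc | hbc
  · linarith [P3 hab, P2 hac, P1 hbc, Qa, Qb, Qc]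
  · linarith [P3 hab, P2 hac, Qa, oneneg s Λ μ₁ b c hs2' hs0 hΛ0 h1 h1' hbc]
  · linarith [P3 hab, P1 hbc, Qb, oneneg s Λ μ₂ a c hs2' hs0 hΛ0 h2 h2' hac]
  · linarith [P3 hab, twoneg s Λ μ₂ μ₁ c a b hs2 hs0 hΛ0 h2 h2' h1 h1'
      (by linarith [mul_comm a c] : c*a < 0) (by linarith [mul_comm b c] : c*b < 0),
      mul_comm c a, mul_comm c b]
  · linarith [P2 hac, P1 hbc, Qc, oneneg s Λ μ₃ a b hs2' hs0 hΛ0 h3 h3' hab]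
  · linarith [P2 hac, twoneg s Λ μ₃ μ₁ b a c hs2 hs0 hΛ0 h3 h3' h1 h1'
      (by linarith [mul_comm a b] : b*a < 0) hbc, mul_comm b a]
  · linarith [P1 hbc, twoneg s Λ μ₃ μ₂ a b c hs2 hs0 hΛ0 h3 h3' h2 h2' hab hac]
  · exfalso
    nlinarith [mul_pos (show (0:ℝ) < -(a*b) by linarith) (show (0:ℝ) < -(a*c) by linarith),
      mul_nonneg (sq_nonneg a) (by linarith : (0:ℝ) ≤ -(b*c))]

/-! ### Triple-sum machinery -/

noncomputable def sw12 {α : Type*} : α × α × α ≃ α × α × α :=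
  ⟨fun t => (t.2.1, t.1, t.2.2), fun t => (t.2.1, t.1, t.2.2),
    fun ⟨_,_,_⟩ => rfl, fun ⟨_,_,_⟩ => rfl⟩

noncomputable def sw13 {α : Type*} : α × α × α ≃ α × α × α :=
  ⟨fun t => (t.2.2, t.2.1, t.1), fun t => (t.2.2, t.2.1, t.1),
    fun ⟨_,_,_⟩ => rfl, fun ⟨_,_,_⟩ => rfl⟩

noncomputable def sw23 {α : Type*} : α × α × α ≃ α × α × α :=
  ⟨fun t => (t.1, t.2.2, t.2.1), fun t => (t.1, t.2.2, t.2.1),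
    fun ⟨_,_,_⟩ => rfl, fun ⟨_,_,_⟩ => rfl⟩

noncomputable def cyc1 {α : Type*} : α × α × α ≃ α × α × α :=
  ⟨fun t => (t.2.1, t.2.2, t.1), fun t => (t.2.2, t.1, t.2.1),
    fun ⟨_,_,_⟩ => rfl, fun ⟨_,_,_⟩ => rfl⟩

noncomputable def cyc2 {α : Type*} : α × α × α ≃ α × α × α :=
  ⟨fun t => (t.2.2, t.1, t.2.1), fun t => (t.2.1, t.2.2, t.1),
    fun ⟨_,_,_⟩ => rfl, fun ⟨_,_,_⟩ => rfl⟩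

lemma sum_perm {n : ℕ} (σ : Fin n × Fin n × Fin n ≃ Fin n × Fin n × Fin n)
    (f : Fin n × Fin n × Fin n → ℝ) : ∑ t, f (σ t) = ∑ t, f t :=
  Fintype.sum_equiv σ _ f (fun _ => rfl)

lemma tsum3 {n : ℕ} (f : Fin n → Fin n → Fin n → ℝ) :
    ∑ k, ∑ i, ∑ j, f i j k = ∑ t : Fin n × Fin n × Fin n, f t.1 t.2.1 t.2.2 := by
  simp only [Fintype.sum_prod_type]
  rw [Finset.sum_comm]
  exact Finset.sum_congr rfl fun i _ => Finset.sum_comm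

lemma tsum3' {n : ℕ} (f : Fin n → Fin n → Fin n → ℝ) :
    ∑ i, ∑ j, ∑ k, f i j k = ∑ t : Fin n × Fin n × Fin n, f t.1 t.2.1 t.2.2 := by
  simp only [Fintype.sum_prod_type]

/-! ### Components of the cross term -/

noncomputable def cc {n : ℕ} (lam : Fin n → ℝ) (H : Fin n → Fin n → Fin n → ℝ) (i j k : Fin n) : ℝ :=
  lam i * lam j * H i j k * H j i k

noncomputable def E0 {n : ℕ} (lam : Fin n → ℝ) (H : Fin n → Fin n → Fin n → ℝ)
    (t : Fin n × Fin n × Fin n) : ℝ :=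
  if t.2.1 ≠ t.1 ∧ t.2.2 ≠ t.1 ∧ t.2.2 ≠ t.2.1 then cc lam H t.1 t.2.1 t.2.2 else 0

noncomputable def E1 {n : ℕ} (lam : Fin n → ℝ) (H : Fin n → Fin n → Fin n → ℝ)
    (t : Fin n × Fin n × Fin n) : ℝ :=
  if t.2.1 ≠ t.1 ∧ t.2.2 = t.1 then cc lam H t.1 t.2.1 t.2.2 else 0

noncomputable def E2 {n : ℕ} (lam : Fin n → ℝ) (H : Fin n → Fin n → Fin n → ℝ)
    (t : Fin n × Fin n × Fin n) : ℝ :=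
  if t.2.1 ≠ t.1 ∧ t.2.2 = t.2.1 then cc lam H t.1 t.2.1 t.2.2 else 0

noncomputable def sq3 {n : ℕ} (H : Fin n → Fin n → Fin n → ℝ) (t : Fin n × Fin n × Fin n) : ℝ :=
  (H t.1 t.2.1 t.2.2)^2

noncomputable def D0 {n : ℕ} (H : Fin n → Fin n → Fin n → ℝ) (t : Fin n × Fin n × Fin n) : ℝ :=
  if t.2.1 ≠ t.1 ∧ t.2.2 ≠ t.1 ∧ t.2.2 ≠ t.2.1 then sq3 H t else 0

noncomputable def D1a {n : ℕ} (H : Fin n → Fin n → Fin n → ℝ) (t : Fin n × Fin n × Fin n) : ℝ :=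
  if t.2.1 ≠ t.1 ∧ t.2.2 = t.1 then sq3 H t else 0

noncomputable def D1b {n : ℕ} (H : Fin n → Fin n → Fin n → ℝ) (t : Fin n × Fin n × Fin n) : ℝ :=
  if t.2.1 ≠ t.1 ∧ t.2.2 = t.1 then (H t.2.1 t.1 t.2.2)^2/2 else 0

noncomputable def D1b' {n : ℕ} (H : Fin n → Fin n → Fin n → ℝ) (t : Fin n × Fin n × Fin n) : ℝ :=
  if t.1 ≠ t.2.1 ∧ t.2.2 = t.2.1 then sq3 H t / 2 else 0

noncomputable def UU {n : ℕ} (H : Fin n → Fin n → Fin n → ℝ) (t : Fin n × Fin n × Fin n) : ℝ :=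
  if t.2.1 = t.1 ∧ t.2.2 ≠ t.1 then sq3 H t else 0

noncomputable def VV {n : ℕ} (H : Fin n → Fin n → Fin n → ℝ) (t : Fin n × Fin n × Fin n) : ℝ :=
  if t.2.1 ≠ t.1 ∧ t.2.2 = t.1 then sq3 H t else 0

/-! ### Pointwise lemmas -/

lemma split_pt {n : ℕ} (lam : Fin n → ℝ) (H : Fin n → Fin n → Fin n → ℝ)
    (t : Fin n × Fin n × Fin n) :
    (if t.2.1 ≠ t.1 then cc lam H t.1 t.2.1 t.2.2 else 0)
      = E0 lam H t + E1 lam H t + E2 lam H t := by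
  obtain ⟨i,j,k⟩ := t
  simp only [E0, E1, E2]
  by_cases h1 : j = i
  · simp [h1]
  · by_cases h2 : k = i
    · subst h2; simp [h1, Ne.symm h1]
    · by_cases h3 : k = j
      · subst h3; simp [h1, h2]
      · simp [h1, h2, h3]

lemma E2_eq_E1 {n : ℕ} (lam : Fin n → ℝ) (H : Fin n → Fin n → Fin n → ℝ)
    (t : Fin n × Fin n × Fin n) : E2 lam H t = E1 lam H (sw12 t) := by
  obtain ⟨i,j,k⟩ := t
  simp only [E1, E2, sw12, cc, Equiv.coe_fn_mk]
  by_cases h1 : j = i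
  · simp [h1]
  · by_cases h3 : k = j
    · rw [if_pos ⟨h1, h3⟩]
      simp only [ne_eq, Ne.symm h1, h3, not_false_eq_true, and_self, eq_self_iff_true, ↓reduceIte]
      ring
    · simp [h1, h3, Ne.symm h1]

lemma D1b_eq {n : ℕ} (H : Fin n → Fin n → Fin n → ℝ)
    (t : Fin n × Fin n × Fin n) : D1b H t = D1b' H (sw12 t) := by
  obtain ⟨i,j,k⟩ := t
  simp only [D1b, D1b', sq3, sw12, Equiv.coe_fn_mk]
  rfl

lemma VV_eq_UU {n : ℕ} (H : Fin n → Fin n → Fin n → ℝ) (hsym : ∀ i j k, H i j k = H i k j)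
    (t : Fin n × Fin n × Fin n) : VV H t = UU H (sw23 t) := by
  obtain ⟨i,j,k⟩ := t
  simp only [VV, UU, sq3, sw23, Equiv.coe_fn_mk]
  by_cases h1 : j = i
  · simp [h1]
  · by_cases h2 : k = i
    · rw [if_pos ⟨h1, h2⟩]
      simp only [ne_eq, h1, h2, not_false_eq_true, and_self, eq_self_iff_true, ↓reduceIte]
      rw [hsym]
    · simp [h1, h2]

lemma E1_bound {n : ℕ} (lam : Fin n → ℝ) (H : Fin n → Fin n → Fin n → ℝ) (Λ s : ℝ)
    (hs2 : s^2 = 2) (hs0 : 0 < s) (hΛ0 : 0 ≤ Λ)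
    (hl0 : ∀ i, 0 ≤ lam i) (hpair : ∀ i j : Fin n, i ≠ j → lam i * lam j ≤ Λ)
    (t : Fin n × Fin n × Fin n) :
    0 ≤ E1 lam H t + Λ/s * (D1a H t + D1b H t) := by
  obtain ⟨i,j,k⟩ := t
  simp only [E1, D1a, D1b, sq3, cc]
  by_cases hg : j ≠ i ∧ k = i
  · rw [if_pos hg, if_pos hg, if_pos hg]
    have := amgm1 s Λ (lam i * lam j) (H i j k) (H j i k) hs2 hs0 hΛ0
      (mul_nonneg (hl0 i) (hl0 j)) (hpair i j (Ne.symm hg.1))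
    nlinarith [this]
  · rw [if_neg hg, if_neg hg, if_neg hg]; simp

lemma sixnn {n : ℕ} (lam : Fin n → ℝ) (H : Fin n → Fin n → Fin n → ℝ) (Λ s : ℝ)
    (hs2 : s^2 = 2) (hs0 : 0 < s) (hΛ0 : 0 ≤ Λ)
    (hl0 : ∀ i, 0 ≤ lam i) (hpair : ∀ i j : Fin n, i ≠ j → lam i * lam j ≤ Λ)
    (hsym : ∀ i j k, H i j k = H i k j)
    (t : Fin n × Fin n × Fin n) :
    0 ≤ (E0 lam H t + Λ/s * D0 H t) + (E0 lam H (sw12 t) + Λ/s * D0 H (sw12 t))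
      + (E0 lam H (sw13 t) + Λ/s * D0 H (sw13 t))
      + (E0 lam H (sw23 t) + Λ/s * D0 H (sw23 t))
      + (E0 lam H (cyc1 t) + Λ/s * D0 H (cyc1 t))
      + (E0 lam H (cyc2 t) + Λ/s * D0 H (cyc2 t)) := by
  obtain ⟨i,j,k⟩ := t
  simp only [E0, D0, sq3, cc, sw12, sw13, sw23, cyc1, cyc2, Equiv.coe_fn_mk]
  by_cases h1 : j = i
  · subst h1; simp
  · by_cases h2 : k = i
    · subst h2; simp [h1]
    · by_cases h3 : k = j
      · subst h3; simp [h1, h2]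
      · -- all distinct
        have n1 : j ≠ i := h1
        have n2 : i ≠ j := fun hh => h1 hh.symm
        have n3 : k ≠ i := h2
        have n4 : i ≠ k := fun hh => h2 hh.symm
        have n5 : k ≠ j := h3
        have n6 : j ≠ k := fun hh => h3 hh.symm
        simp only [ne_eq, n1, n2, n3, n4, n5, n6, not_false_eq_true, and_self, if_true,
          true_and, and_true, if_pos]
        have e1 : H i k j = H i j k := (hsym i j k).symm
        have e2 : H j k i = H j i k := (hsym j i k).symm
        have e3 : H k j i = H k i j := (hsym k i j).symm
        rw [e1, e2, e3]
        have hP := lemP s Λ (lam j * lam k) (lam i * lam k) (lam i * lam j)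
          (H i j k) (H j i k) (H k i j) hs2 hs0 hΛ0
          (mul_nonneg (hl0 j) (hl0 k)) (mul_nonneg (hl0 i) (hl0 k))
          (mul_nonneg (hl0 i) (hl0 j)) (hpair j k n6) (hpair i k n4) (hpair i j n2)
        nlinarith [hP]


lemma acc_pt {n : ℕ} (H : Fin n → Fin n → Fin n → ℝ) (t : Fin n × Fin n × Fin n) :
    D0 H t + 2*D1a H t + 2*D1b' H t ≤ (sq3 H t - UU H t) + VV H t := by
  obtain ⟨i,j,k⟩ := t
  simp only [D0, D1a, D1b', UU, VV, sq3]
  by_cases h1 : j = i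
  · by_cases h2 : k = i
    · simp [h1, h2] <;> positivity
    · simp [h1, h2]
  · have n2 : i ≠ j := fun hh => h1 hh.symm
    by_cases h2 : k = i
    · simp [h1, h2, n2] <;> linarith [sq_nonneg (H i j i)]
    · by_cases h3 : k = j
      · simp [h1, h2, h3, n2] <;> linarith [sq_nonneg (H i j j)]
      · simp [h1, h2, h3, n2] <;> linarith [sq_nonneg (H i j k)]

lemma cross_bound {n : ℕ} (lam : Fin n → ℝ) (H : Fin n → Fin n → Fin n → ℝ) (Λ s : ℝ)
    (hs2 : s^2 = 2) (hs0 : 0 < s) (hΛ0 : 0 ≤ Λ)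
    (hl0 : ∀ i, 0 ≤ lam i) (hpair : ∀ i j : Fin n, i ≠ j → lam i * lam j ≤ Λ)
    (hsym : ∀ i j k, H i j k = H i k j) :
    -(Λ / s) * (∑ i, ∑ j, ∑ k, (H i j k)^2)
      ≤ ∑ k, ∑ i, ∑ j ∈ univ.erase i, lam i * lam j * H i j k * H j i k := by
  have hΛs : 0 ≤ Λ/s := div_nonneg hΛ0 hs0.le
  -- convert the RHS into sums over the product type
  have hR1 : (∑ k, ∑ i, ∑ j ∈ univ.erase i, lam i * lam j * H i j k * H j i k)
      = ∑ k, ∑ i, ∑ j, (if j ≠ i then cc lam H i j k else 0) :=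
    Finset.sum_congr rfl fun k _ => Finset.sum_congr rfl fun i _ => by
      rw [← Finset.filter_ne', Finset.sum_filter]
      exact Finset.sum_congr rfl fun j _ => by simp [cc]
  have hR2 : (∑ k, ∑ i, ∑ j, (if j ≠ i then cc lam H i j k else 0))
      = ∑ t : Fin n × Fin n × Fin n, (if t.2.1 ≠ t.1 then cc lam H t.1 t.2.1 t.2.2 else 0) :=
    tsum3 _
  have hR3 : (∑ t : Fin n × Fin n × Fin n, (if t.2.1 ≠ t.1 then cc lam H t.1 t.2.1 t.2.2 else 0))
      = ∑ t, E0 lam H t + ∑ t, E1 lam H t + ∑ t, E2 lam H t := by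
    rw [Finset.sum_congr rfl fun t _ => split_pt lam H t, Finset.sum_add_distrib,
      Finset.sum_add_distrib]
  have hE2 : ∑ t, E2 lam H t = ∑ t, E1 lam H t := by
    calc ∑ t, E2 lam H t = ∑ t, E1 lam H (sw12 t) :=
          Finset.sum_congr rfl fun t _ => E2_eq_E1 lam H t
      _ = ∑ t, E1 lam H t := sum_perm _ _
  -- convert the LHS
  have hL : (∑ i, ∑ j, ∑ k, (H i j k)^2) = ∑ t, sq3 H t := by
    rw [tsum3' (fun i j k => (H i j k)^2)]; rfl
  -- bound on the E1 part
  have hb1 : -(Λ/s) * (∑ t, D1a H t + ∑ t, D1b H t) ≤ ∑ t, E1 lam H t := by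
    have hpt := Finset.sum_nonneg (fun t (_ : t ∈ (univ : Finset (Fin n × Fin n × Fin n))) =>
      E1_bound lam H Λ s hs2 hs0 hΛ0 hl0 hpair t)
    rw [Finset.sum_add_distrib, ← Finset.mul_sum, Finset.sum_add_distrib] at hpt
    linarith
  -- bound on the E0 part
  have hb0 : -(Λ/s) * (∑ t, D0 H t) ≤ ∑ t, E0 lam H t := by
    have h6 := Finset.sum_nonneg (fun t (_ : t ∈ (univ : Finset (Fin n × Fin n × Fin n))) =>
      sixnn lam H Λ s hs2 hs0 hΛ0 hl0 hpair hsym t)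
    simp only [Finset.sum_add_distrib] at h6
    have p1 : ∑ t, E0 lam H (sw12 t) = ∑ t, E0 lam H t := sum_perm sw12 _
    have p2 : ∑ t, E0 lam H (sw13 t) = ∑ t, E0 lam H t := sum_perm sw13 _
    have p3 : ∑ t, E0 lam H (sw23 t) = ∑ t, E0 lam H t := sum_perm sw23 _
    have p4 : ∑ t, E0 lam H (cyc1 t) = ∑ t, E0 lam H t := sum_perm cyc1 _
    have p5 : ∑ t, E0 lam H (cyc2 t) = ∑ t, E0 lam H t := sum_perm cyc2 _
    have q1 : ∑ t, Λ/s * D0 H (sw12 t) = ∑ t, Λ/s * D0 H t := sum_perm sw12 (fun t => Λ/s * D0 H t)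
    have q2 : ∑ t, Λ/s * D0 H (sw13 t) = ∑ t, Λ/s * D0 H t := sum_perm sw13 (fun t => Λ/s * D0 H t)
    have q3 : ∑ t, Λ/s * D0 H (sw23 t) = ∑ t, Λ/s * D0 H t := sum_perm sw23 (fun t => Λ/s * D0 H t)
    have q4 : ∑ t, Λ/s * D0 H (cyc1 t) = ∑ t, Λ/s * D0 H t := sum_perm cyc1 (fun t => Λ/s * D0 H t)
    have q5 : ∑ t, Λ/s * D0 H (cyc2 t) = ∑ t, Λ/s * D0 H t := sum_perm cyc2 (fun t => Λ/s * D0 H t)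
    rw [p1, p2, p3, p4, p5, q1, q2, q3, q4, q5] at h6
    have hmul : ∑ t, Λ/s * D0 H t = Λ/s * ∑ t, D0 H t := (Finset.mul_sum _ _ _).symm
    linarith
  -- the accounting step
  have hD1b : ∑ t, D1b H t = ∑ t, D1b' H t := by
    calc ∑ t, D1b H t = ∑ t, D1b' H (sw12 t) :=
          Finset.sum_congr rfl fun t _ => D1b_eq H t
      _ = ∑ t, D1b' H t := sum_perm _ _
  have hUV : ∑ t, VV H t = ∑ t, UU H t := by
    calc ∑ t, VV H t = ∑ t, UU H (sw23 t) :=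
          Finset.sum_congr rfl fun t _ => VV_eq_UU H hsym t
      _ = ∑ t, UU H t := sum_perm _ _
  have hacc := Finset.sum_le_sum (fun t (_ : t ∈ (univ : Finset (Fin n × Fin n × Fin n))) =>
    acc_pt H t)
  rw [Finset.sum_add_distrib, Finset.sum_add_distrib, Finset.sum_add_distrib,
    Finset.sum_sub_distrib, ← Finset.mul_sum, ← Finset.mul_sum] at hacc
  -- put everything together
  rw [hR1, hR2, hR3, hE2, hL]
  have hfin : (Λ/s) * (∑ t, D0 H t + 2 * ∑ t, D1a H t + 2 * ∑ t, D1b H t)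
      ≤ (Λ/s) * ∑ t, sq3 H t := by
    apply mul_le_mul_of_nonneg_left _ hΛs
    rw [hD1b]
    linarith [hacc, hUV]
  linarith [hb0, hb1, hfin]

lemma Hsq_le {n m : ℕ} (h : Fin m → Fin n → Fin n → ℝ) (H : Fin n → Fin n → Fin n → ℝ)
    (hH : ∀ i j k, H i j k = if hi : (i : ℕ) < m then h ⟨(i : ℕ), hi⟩ j k else 0) :
    (∑ i : Fin n, ∑ j, ∑ k, (H i j k)^2) ≤ ∑ α : Fin m, ∑ j, ∑ k, (h α j k)^2 := by
  classical
  set gN : ℕ → ℝ := fun a => if ha : a < m ∧ a < n then ∑ j, ∑ k, (h ⟨a, ha.1⟩ j k)^2 else 0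
    with hgN
  have h1 : (∑ i : Fin n, ∑ j, ∑ k, (H i j k)^2) = ∑ a ∈ Finset.range n, gN a := by
    rw [← Fin.sum_univ_eq_sum_range]
    refine Finset.sum_congr rfl fun i _ => ?_
    by_cases hi : (i : ℕ) < m
    · rw [hgN]; dsimp only; rw [dif_pos ⟨hi, i.isLt⟩]
      exact Finset.sum_congr rfl fun j _ => Finset.sum_congr rfl fun k _ => by
        rw [hH i j k, dif_pos hi]
    · rw [hgN]; dsimp only; rw [dif_neg (fun hc => hi hc.1)]
      simp [hH, hi]
  have h2 : ∑ a ∈ Finset.range n, gN a = ∑ a ∈ Finset.range m, gN a := by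
    have e1 : ∑ a ∈ Finset.range (min m n), gN a = ∑ a ∈ Finset.range n, gN a := by
      refine Finset.sum_subset (Finset.range_subset_range.2 (Nat.min_le_right m n)) ?_
      intro x hx hnx
      simp only [Finset.mem_range] at hx hnx
      rw [hgN]; dsimp only; rw [dif_neg (by omega)]
    have e2 : ∑ a ∈ Finset.range (min m n), gN a = ∑ a ∈ Finset.range m, gN a := by
      refine Finset.sum_subset (Finset.range_subset_range.2 (Nat.min_le_left m n)) ?_
      intro x hx hnx
      simp only [Finset.mem_range] at hx hnx
      rw [hgN]; dsimp only; rw [dif_neg (by omega)]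
    rw [← e1, e2]
  have h3 : ∑ a ∈ Finset.range m, gN a ≤ ∑ α : Fin m, ∑ j, ∑ k, (h α j k)^2 := by
    rw [← Fin.sum_univ_eq_sum_range]
    refine Finset.sum_le_sum fun α _ => ?_
    rw [hgN]; dsimp only
    by_cases hα : (α : ℕ) < n
    · rw [dif_pos ⟨α.isLt, hα⟩]
    · rw [dif_neg (fun hc => hα hc.2)]
      positivity
  rw [h1, h2]; exact h3

lemma cs_step {n : ℕ} (hn : 0 < n) (lam : Fin n → ℝ) (H : Fin n → Fin n → Fin n → ℝ) :
    (1 / (n : ℝ)) * ∑ j, (∑ i, lam i * H i i j) ^ 2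
      ≤ ∑ i, ∑ j, (lam i)^2 * (H i i j)^2 := by
  have hn' : (0:ℝ) < n := by exact_mod_cast hn
  have key : ∀ j : Fin n, (∑ i, lam i * H i i j)^2 ≤ (n:ℝ) * ∑ i, (lam i * H i i j)^2 := by
    intro j
    have := sq_sum_le_card_mul_sum_sq (s := (univ : Finset (Fin n)))
      (f := fun i => lam i * H i i j)
    simpa using this
  calc (1 / (n : ℝ)) * ∑ j, (∑ i, lam i * H i i j) ^ 2
      ≤ (1 / (n:ℝ)) * ∑ j : Fin n, ((n:ℝ) * ∑ i, (lam i * H i i j)^2) :=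
        mul_le_mul_of_nonneg_left (Finset.sum_le_sum fun j _ => key j) (by positivity)
    _ = ∑ j : Fin n, ∑ i, (lam i * H i i j)^2 := by
        rw [← Finset.mul_sum, ← mul_assoc, one_div, inv_mul_cancel₀ hn'.ne', one_mul]
    _ = ∑ i, ∑ j, (lam i)^2 * (H i i j)^2 := by
        rw [Finset.sum_comm]
        exact Finset.sum_congr rfl fun i _ => Finset.sum_congr rfl fun j _ => by
          rw [← mul_pow]

end CorAux

open CorAux in

/-- **The algebraic inequality behind
`Δ_M log v ≥ (1 − Λ/√2)|B_M|² + (1/n)|∇ log v|²`** (Corollary 6.2). Indices are 0-based: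
`lam ⟨0,_⟩` is `λ₁`, `(i : ℕ) ≥ m` means `i > m` in 1-based notation, and `H i j k` is
`h_{i,jk}` (interpreted as `0` when `i > m`). -/
theorem log_slope_laplacian_inequality_small_dilation
    (n m : ℕ) (hn : 2 ≤ n) (hm : 1 ≤ m)
    (Λ : ℝ) (hΛ0 : 0 < Λ) (hΛ : Λ ≤ Real.sqrt 2)
    (lam : Fin n → ℝ)
    (hnonneg : ∀ i, 0 ≤ lam i)
    (hmono : ∀ i j : Fin n, i ≤ j → lam j ≤ lam i)
    (hzero : ∀ i : Fin n, m ≤ (i : ℕ) → lam i = 0)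
    (hcond : ∀ i : Fin n, (i : ℕ) ≠ 0 → lam ⟨0, by omega⟩ * lam i ≤ Λ)
    (h : Fin m → Fin n → Fin n → ℝ)
    (hsymm : ∀ α i j, h α i j = h α j i)
    (H : Fin n → Fin n → Fin n → ℝ)
    (hH : ∀ i j k, H i j k = if hi : (i : ℕ) < m then h ⟨(i : ℕ), hi⟩ j k else 0) :
    (∑ α : Fin m, ∑ i : Fin n, ∑ j : Fin n, (h α i j) ^ 2)
      + (∑ i : Fin n, ∑ j : Fin n, (lam i) ^ 2 * (H i i j) ^ 2)
      + (∑ k : Fin n, ∑ i : Fin n, ∑ j ∈ univ.erase i,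
          lam i * lam j * H i j k * H j i k)
    ≥ (1 - Λ / Real.sqrt 2)
        * (∑ α : Fin m, ∑ i : Fin n, ∑ j : Fin n, (h α i j) ^ 2)
      + (1 / (n : ℝ)) * ∑ j : Fin n, (∑ i : Fin n, lam i * H i i j) ^ 2 := by
  have hs2 : (Real.sqrt 2)^2 = 2 := Real.sq_sqrt (by norm_num)
  have hs0 : 0 < Real.sqrt 2 := Real.sqrt_pos.2 (by norm_num)
  have hpair : ∀ i j : Fin n, i ≠ j → lam i * lam j ≤ Λ := by
    intro i j hij
    have hle : ∀ t : Fin n, lam t ≤ lam ⟨0, by omega⟩ := fun t =>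
      hmono ⟨0, by omega⟩ t (by simp [Fin.le_def])
    by_cases hj : (j : ℕ) = 0
    · have hi : (i : ℕ) ≠ 0 := fun hc => hij (Fin.ext (by omega))
      have hj' : j = ⟨(0:ℕ), by omega⟩ := Fin.ext hj
      calc lam i * lam j = lam ⟨0, by omega⟩ * lam i := by rw [hj']; ring
        _ ≤ Λ := hcond i hi
    · calc lam i * lam j ≤ lam ⟨0, by omega⟩ * lam j :=
          mul_le_mul_of_nonneg_right (hle i) (hnonneg j)
        _ ≤ Λ := hcond j hj
  have hsymH : ∀ i j k, H i j k = H i k j := by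
    intro i j k
    rw [hH, hH]
    by_cases hi : (i:ℕ) < m
    · rw [dif_pos hi, dif_pos hi]; exact hsymm _ j k
    · rw [dif_neg hi, dif_neg hi]
  have hcross := cross_bound lam H Λ (Real.sqrt 2) hs2 hs0 hΛ0.le hnonneg hpair hsymH
  have hHle := Hsq_le h H hH
  have hcs := cs_step (by omega : 0 < n) lam H
  have hΛs : 0 ≤ Λ / Real.sqrt 2 := div_nonneg hΛ0.le hs0.le
  have hmul := mul_le_mul_of_nonneg_left hHle hΛs
  rw [ge_iff_le]
  linarith [hcross, hcs, hmul]
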